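/- If a : [0,∞) → ℝ is measurable, essentially bounded, and there exist a₀ > 0, h > 0, t₀ ≥ 0 such that ∫_t^{t+h} a(s) ds ≥ a₀ for all t ≥ t₀, then there exist M > 0 and λ > 0 such that exp(-∫_s^t a(ξ) dξ) ≤ M e^{-λ(t-s)} for all t ≥ s ≥ t₀. -/

import Mathlib

open Real MeasureTheory Set

theorem stmt_1 (a : ℝ → ℝ) (t₀ a₀ h : ℝ)
    (ha : Measurable a) (hb : ∃ C : ℝ, ∀ᵐ t ∂(volume : Measure ℝ), |a t| ≤ C)
    (ht₀ : 0 ≤ t₀) (ha₀ : 0 < a₀) (hh : 0 < h)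
    (hwin : ∀ t : ℝ, t₀ ≤ t → a₀ ≤ ∫ s in t..(t + h), a s) :
    ∃ M > 0, ∃ lam > 0, ∀ s t : ℝ, t₀ ≤ s → s ≤ t →
      Real.exp (-∫ ξ in s..t, a ξ) ≤ M * Real.exp (-lam * (t - s)) := by
  obtain ⟨C, hC⟩ := hb
  set C' : ℝ := max C 0 with hC'def
  have hC'nn : 0 ≤ C' := le_max_right _ _
  have hC' : ∀ᵐ t ∂(volume : Measure ℝ), |a t| ≤ C' :=
    hC.mono fun t ht => ht.trans (le_max_left _ _)
  have hInt : ∀ u v : ℝ, IntervalIntegrable a volume u v := by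
    intro u v
    rw [intervalIntegrable_iff]
    have hconst : IntegrableOn (fun _ : ℝ => C') (Set.uIoc u v) volume :=
      integrableOn_const measure_Ioc_lt_top.ne
    exact hconst.mono' ha.aestronglyMeasurable.restrict (ae_restrict_of_ae hC')
  have hbd : ∀ u v : ℝ, u ≤ v → |∫ ξ in u..v, a ξ| ≤ C' * (v - u) := by
    intro u v huv
    calc |∫ ξ in u..v, a ξ| ≤ ∫ ξ in u..v, |a ξ| :=
          intervalIntegral.abs_integral_le_integral_abs huv
      _ ≤ ∫ _ in u..v, C' := by
          apply intervalIntegral.integral_mono_ae huv ((hInt u v).abs)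
            intervalIntegrable_const
          exact hC'
      _ = C' * (v - u) := by simp [mul_comm]
  have key : ∀ n : ℕ, ∀ s : ℝ, t₀ ≤ s → (n : ℝ) * a₀ ≤ ∫ ξ in s..(s + n * h), a ξ := by
    intro n
    induction n with
    | zero => intro s hs; simp
    | succ n ih =>
      intro s hs
      have hnh : (0:ℝ) ≤ (n:ℝ) * h := by positivity
      have hsplit : ∫ ξ in s..(s + (n+1 : ℕ) * h), a ξ =
          (∫ ξ in s..(s + n * h), a ξ) + ∫ ξ in (s + n * h)..(s + (n+1 : ℕ) * h), a ξ :=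
        (intervalIntegral.integral_add_adjacent_intervals (hInt _ _) (hInt _ _)).symm
      have heq : s + ((n:ℕ)+1 : ℕ) * h = (s + n * h) + h := by push_cast; ring
      have hw : a₀ ≤ ∫ ξ in (s + n * h)..((s + n * h) + h), a ξ :=
        hwin (s + n * h) (by linarith)
      have := ih s hs
      rw [hsplit, heq]
      push_cast
      linarith
  refine ⟨Real.exp (a₀ + C' * h), Real.exp_pos _, a₀ / h, div_pos ha₀ hh, ?_⟩
  intro s t hs hst
  set n : ℕ := ⌊(t - s) / h⌋₊ with hn
  have hfl : (n : ℝ) ≤ (t - s) / h := Nat.floor_le (div_nonneg (by linarith) hh.le)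
  have hfl2 : (t - s) / h < (n : ℝ) + 1 := Nat.lt_floor_add_one _
  have hn1 : (n : ℝ) * h ≤ t - s := by
    rw [← le_div_iff₀ hh] at *; linarith
  have hn2 : t - s < ((n : ℝ) + 1) * h := by
    rw [← div_lt_iff₀ hh] at *; linarith
  have hle : s + n * h ≤ t := by linarith
  have hsplit : (∫ ξ in s..t, a ξ) =
      (∫ ξ in s..(s + n * h), a ξ) + ∫ ξ in (s + n * h)..t, a ξ :=
    (intervalIntegral.integral_add_adjacent_intervals (hInt _ _) (hInt _ _)).symm
  have hrem : |∫ ξ in (s + n * h)..t, a ξ| ≤ C' * h := by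
    have h1 := hbd (s + n * h) t hle
    have h2 : C' * (t - (s + n * h)) ≤ C' * h := by
      apply mul_le_mul_of_nonneg_left _ hC'nn
      linarith
    linarith
  have hlow1 : (n : ℝ) * a₀ ≤ ∫ ξ in s..(s + n * h), a ξ := key n s hs
  have hI : (a₀ / h) * (t - s) - (a₀ + C' * h) ≤ ∫ ξ in s..t, a ξ := by
    have habs := abs_le.1 hrem
    have hna : ((t - s) / h - 1) * a₀ ≤ (n : ℝ) * a₀ := by nlinarith
    have : (a₀ / h) * (t - s) = ((t - s) / h) * a₀ := by ring
    rw [hsplit]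
    nlinarith
  rw [← Real.exp_add, Real.exp_le_exp]
  nlinarith [hI]
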